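/- Let m be a positive integer with 4 | m and a an odd integer coprime to m. Then the sign of the permutation x ↦ ax of Z/mZ equals (-1)^{(a-1)/2}. -/

import Mathlib

open Equiv Equiv.Perm

private lemma addRight_pow (n : ℕ) : ∀ k : ℕ,
    (Equiv.addRight (1 : ZMod n)) ^ k = Equiv.addRight (k : ZMod n) := by
  intro k
  induction k with
  | zero => ext x; simp
  | succ k ih => ext x; push_cast; simp [pow_succ, ih]; ring

private lemma sign_addRight_one (n : ℕ) [NeZero n] (hn : Even n) :
    Equiv.Perm.sign (Equiv.addRight (1 : ZMod n)) = -1 := by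
  have h2 : 2 ≤ n := by
    rcases hn with ⟨t, ht⟩
    have := NeZero.ne n
    omega
  haveI : Fact (1 < n) := ⟨h2⟩
  have hne : ∀ x : ZMod n, x + 1 ≠ x := by
    intro x h
    have : (1 : ZMod n) = 0 := by
      have := congrArg (· - x) h
      simpa [add_comm] using this
    exact one_ne_zero this
  have hc : (Equiv.addRight (1 : ZMod n)).IsCycle := by
    refine ⟨0, by simpa using hne 0, ?_⟩
    intro y _
    refine ⟨(y.val : ℤ), ?_⟩
    rw [zpow_natCast, addRight_pow]
    simp [ZMod.natCast_rightInverse y]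
  have hsupp : (Equiv.addRight (1 : ZMod n)).support = Finset.univ := by
    ext x; simp [Equiv.Perm.mem_support, hne x]
  rw [hc.sign, hsupp]
  simp [ZMod.card, hn.neg_one_pow]

theorem stmt8 (m : ℕ) [NeZero m] (hm : 4 ∣ m) (a : ℤ) (haodd : Odd a)
    (ha : IsCoprime a (m : ℤ))
    (π : Equiv.Perm (ZMod m)) (hπ : ∀ x : ZMod m, π x = (a : ZMod m) * x) :
    Equiv.Perm.sign π = (-1 : ℤˣ) ^ ((a - 1) / 2) := by
  obtain ⟨t, ht⟩ := hm
  set n : ℕ := 2 * t with hn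
  have hm2 : m = 2 * n := by omega
  have hnz : n ≠ 0 := by have := NeZero.ne m; omega
  haveI : NeZero n := ⟨hnz⟩
  have hneven : Even n := ⟨t, by omega⟩
  obtain ⟨k, hk⟩ := haodd
  have hdiv : (a - 1) / 2 = k := by
    have h1 : a - 1 = 2 * k := by omega
    rw [h1, Int.mul_ediv_cancel_left _ two_ne_zero]
  -- a is a unit mod n
  have hcop : IsCoprime a (n : ℤ) :=
    ha.of_isCoprime_of_dvd_right ⟨2, by push_cast [hm2]; ring⟩
  obtain ⟨u, v, huv⟩ := hcop
  have hunit : IsUnit ((a : ℤ) : ZMod n) := by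
    apply IsUnit.of_mul_eq_one ((u : ℤ) : ZMod n)
    have h := congrArg (fun z : ℤ => (z : ZMod n)) huv
    push_cast at h
    rw [ZMod.natCast_self, mul_zero, add_zero] at h
    rw [mul_comm] at h; exact h
  obtain ⟨U, hU⟩ := hunit
  set c : ZMod n := ((k : ℤ) : ZMod n) with hc
  set g1 : Equiv.Perm (ZMod n) := Units.mulLeft U with hg1
  set g2 : Equiv.Perm (ZMod n) := g1.trans (Equiv.addRight c) with hg2
  -- the even/odd splitting bijection
  set f : ZMod n ⊕ ZMod n → ZMod m :=
    Sum.elim (fun y => ((2 * y.val : ℕ) : ZMod m)) (fun y => ((2 * y.val + 1 : ℕ) : ZMod m))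
    with hf
  have hlt : ∀ y : ZMod n, y.val < n := fun y => ZMod.val_lt y
  have hinj : Function.Injective f := by
    rintro (y | y) (y' | y') h <;>
      simp only [hf, Sum.elim_inl, Sum.elim_inr] at h <;>
      have h2 := congrArg ZMod.val h <;>
      rw [ZMod.val_cast_of_lt (by have := hlt y; omega),
        ZMod.val_cast_of_lt (by have := hlt y'; omega)] at h2
    · exact congrArg Sum.inl (ZMod.val_injective n (by omega))
    · omega
    · omega
    · exact congrArg Sum.inr (ZMod.val_injective n (by omega))
  have hcard : Fintype.card (ZMod n ⊕ ZMod n) = Fintype.card (ZMod m) := by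
    simp [ZMod.card]; omega
  set e : (ZMod n ⊕ ZMod n) ≃ ZMod m :=
    Equiv.ofBijective f ((Fintype.bijective_iff_injective_and_card f).2 ⟨hinj, hcard⟩) with he
  -- key congruence lemma
  have L : ∀ (w : ZMod n) (z : ℤ), ((z : ZMod n) = w) →
      ((2 * w.val : ℕ) : ZMod m) = ((2 * z : ℤ) : ZMod m) := by
    intro w z hzw
    have h1 : (w.val : ℤ) ≡ z [ZMOD (n : ℤ)] := by
      rw [← ZMod.intCast_eq_intCast_iff]
      push_cast
      rw [ZMod.natCast_val w, ZMod.cast_id, hzw]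
    have h2 : (2 : ℤ) * (w.val : ℤ) ≡ 2 * z [ZMOD (2 : ℤ) * (n : ℤ)] := h1.mul_left'
    calc ((2 * w.val : ℕ) : ZMod m) = (((2 * (w.val : ℤ)) : ℤ) : ZMod m) := by push_cast; ring
      _ = ((2 * z : ℤ) : ZMod m) := by
          rw [ZMod.intCast_eq_intCast_iff]
          have : ((m : ℕ) : ℤ) = 2 * (n : ℤ) := by rw [hm2]; push_cast; ring
          rw [this]; exact h2
  have hcomm : ∀ s, e ((Equiv.sumCongr g1 g2) s) = π (e s) := by
    rintro (y | y)
    · have hz : ((a * (y.val : ℤ) : ℤ) : ZMod n) = g1 y := by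
        push_cast
        rw [ZMod.natCast_val y, ZMod.cast_id, hg1]
        simp [Units.mulLeft, hU]
      have := L (g1 y) (a * (y.val : ℤ)) hz
      simp only [he, Equiv.sumCongr_apply, Sum.map_inl, Equiv.ofBijective_apply, hf,
        Sum.elim_inl, hπ]
      rw [this]; push_cast; ring
    · have hz : ((a * (y.val : ℤ) + k : ℤ) : ZMod n) = g2 y := by
        push_cast
        rw [ZMod.natCast_val y, ZMod.cast_id, hg2, hg1]
        simp [Units.mulLeft, hU, hc]
      have hL := L (g2 y) (a * (y.val : ℤ) + k) hz
      simp only [he, Equiv.sumCongr_apply, Sum.map_inr, Equiv.ofBijective_apply, hf,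
        Sum.elim_inr, hπ]
      push_cast
      push_cast at hL
      rw [hL]
      have : (a : ZMod m) = 2 * (k : ZMod m) + 1 := by
        have : ((a : ℤ) : ZMod m) = ((2 * k + 1 : ℤ) : ZMod m) := by rw [← hk]
        push_cast at this; exact this
      rw [this]; ring
  have hsign := Equiv.Perm.sign_eq_sign_of_equiv (Equiv.sumCongr g1 g2) π e hcomm
  rw [← hsign, Equiv.Perm.sign_sumCongr]
  have hg2s : Equiv.Perm.sign g2 = Equiv.Perm.sign (Equiv.addRight c) * Equiv.Perm.sign g1 := by
    have hmul : g2 = (Equiv.addRight c) * g1 := rfl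
    rw [hmul, map_mul]
  rw [hg2s, mul_left_comm, Int.units_mul_self, mul_one]
  set j : ℕ := c.val with hj
  have hcr : Equiv.addRight c = (Equiv.addRight (1 : ZMod n)) ^ j := by
    rw [addRight_pow]
    congr 1
    exact (ZMod.natCast_rightInverse c).symm
  rw [hcr, map_pow, sign_addRight_one n hneven, hdiv]
  have hpar : (j : ℤ) % 2 = k % 2 := by
    have h1 : (j : ℤ) ≡ k [ZMOD (n : ℤ)] := by
      rw [← ZMod.intCast_eq_intCast_iff]
      push_cast
      rw [hj, ZMod.natCast_val c, ZMod.cast_id, hc]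
    have h2 : (2 : ℤ) ∣ (n : ℤ) := ⟨t, by push_cast [hn]; ring⟩
    exact h1.of_dvd h2
  rcases Int.even_or_odd k with hek | hok
  · have hej : Even j := by
      have : Even ((j : ℤ)) := by rw [Int.even_iff] at *; omega
      exact_mod_cast this
    rw [hej.neg_one_pow, hek.neg_one_zpow]
  · have hoj : Odd j := by
      have : Odd ((j : ℤ)) := by rw [Int.odd_iff] at *; omega
      exact_mod_cast this
    rw [hoj.neg_one_pow]
    obtain ⟨l, hl⟩ := hok
    subst hl
    rw [zpow_add, zpow_mul, zpow_one]
    have h2 : ((-1 : ℤˣ)) ^ (2 : ℤ) = 1 := by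
      rw [show (2 : ℤ) = ((2 : ℕ) : ℤ) from rfl, zpow_natCast, neg_one_sq]
    rw [h2, one_zpow, one_mul]
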